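/- For all natural numbers m ≥ 1 and n ≥ 1, the identity ∑_{j=0}^{n-1} 2^{m-j} · C(m+j-1, j) · (m-j) = n · 2^{m-n+1} · C(m+n-1, n) holds. -/

import Mathlib

theorem stmt1 (m n : ℕ) (hm : 1 ≤ m) (hn : 1 ≤ n) :
    ∑ j ∈ Finset.range n,
      (2 : ℚ) ^ ((m : ℤ) - (j : ℤ)) * (Nat.choose (m + j - 1) j : ℚ) * ((m : ℚ) - (j : ℚ)) =
    (n : ℚ) * (2 : ℚ) ^ ((m : ℤ) - (n : ℤ) + 1) * (Nat.choose (m + n - 1) n : ℚ) := by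
  induction n with
  | zero => omega
  | succ n ih =>
    rcases Nat.eq_zero_or_pos n with rfl | hn'
    · rw [Finset.sum_range_one]
      have h1 : m + 1 - 1 = m := by omega
      have h2 : m + 0 - 1 = m - 1 := by omega
      rw [h1, h2, Nat.choose_one_right, Nat.choose_zero_right]
      have h3 : (m : ℤ) - (((0 : ℕ) + 1 : ℕ) : ℤ) + 1 = (m : ℤ) - ((0 : ℕ) : ℤ) := by
        push_cast; ring
      rw [h3]
      push_cast
      ring
    · rw [Finset.sum_range_succ, ih hn']
      have key : ((n + 1) : ℚ) * (Nat.choose (m + n) (n + 1) : ℚ)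
          = ((m + n) : ℚ) * (Nat.choose (m + n - 1) n : ℚ) := by
        have h0 := Nat.add_one_mul_choose_eq (m + n - 1) n
        have h1 : m + n - 1 + 1 = m + n := by omega
        simp only [Nat.succ_eq_add_one, h1] at h0
        have := congrArg (Nat.cast : ℕ → ℚ) h0
        push_cast at this
        linarith [this]
      have h2 : m + (n + 1) - 1 = m + n := by omega
      rw [h2]
      have hpow : (2 : ℚ) ^ ((m : ℤ) - (n : ℤ) + 1) = 2 * (2 : ℚ) ^ ((m : ℤ) - (n : ℤ)) := by
        rw [zpow_add₀ (by norm_num : (2:ℚ) ≠ 0)]; ring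
      have hpow2 : (2 : ℚ) ^ ((m : ℤ) - ((n : ℤ) + 1) + 1) = (2 : ℚ) ^ ((m : ℤ) - (n : ℤ)) := by
        ring_nf
      push_cast
      rw [hpow, hpow2]
      linear_combination -(2 : ℚ) ^ ((m : ℤ) - (n : ℤ)) * key
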